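/- For all integers 1 ≤ i ≤ k, the following identity holds: 2^{−i} · ∏_{m=1, m≠i}^{k} |2^{−m} − 2^{−i}| = 2^{−i(i+1)/2 − i(k−i)} · ∏_{m=1}^{i−1} (1 − 2^{−m}) · ∏_{m=1}^{k−i} (1 − 2^{−m}). -/

import Mathlib

lemma sum_Icc_one (n : ℕ) : ∑ m ∈ Finset.Icc 1 n, m = n * (n + 1) / 2 := by
  induction n with
  | zero => simp
  | succ n ih =>
    rw [Finset.sum_Icc_succ_top (by omega), ih]
    have h2 : 2 ∣ n * (n + 1) := (Nat.even_mul_succ_self n).two_dvd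
    have key : (n+1)*(n+1+1) = n*(n+1) + 2*(n+1) := by ring
    omega



/-- For `1 ≤ i ≤ k`,
`2^{-i} · ∏_{m ∈ {1,…,k}, m ≠ i} |2^{-m} − 2^{-i}|
  = 2^{-i(i+1)/2 − i(k−i)} · ∏_{m=1}^{i-1} (1 − 2^{-m}) · ∏_{m=1}^{k-i} (1 − 2^{-m})`. -/
theorem node_distance_product_identity (k i : ℕ) (h1 : 1 ≤ i) (h2 : i ≤ k) :
    ((2 : ℝ) ^ i)⁻¹ *
        ∏ m ∈ (Finset.Icc 1 k).erase i, |((2 : ℝ) ^ m)⁻¹ - ((2 : ℝ) ^ i)⁻¹| =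
      ((2 : ℝ) ^ (i * (i + 1) / 2 + i * (k - i)))⁻¹ *
        (∏ m ∈ Finset.Icc 1 (i - 1), (1 - ((2 : ℝ) ^ m)⁻¹)) *
        ∏ m ∈ Finset.Icc 1 (k - i), (1 - ((2 : ℝ) ^ m)⁻¹) := by
  have hsplit : (Finset.Icc 1 k).erase i = Finset.Icc 1 (i-1) ∪ Finset.Icc (i+1) k := by
    ext m; simp only [Finset.mem_erase, Finset.mem_Icc, Finset.mem_union]; omega
  have hdisj : Disjoint (Finset.Icc 1 (i-1)) (Finset.Icc (i+1) k) := by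
    rw [Finset.disjoint_left]; intro a ha hb
    simp only [Finset.mem_Icc] at ha hb; omega
  rw [hsplit, Finset.prod_union hdisj]
  have hL : (∏ m ∈ Finset.Icc 1 (i-1), |((2:ℝ)^m)⁻¹ - ((2:ℝ)^i)⁻¹|)
      = ((2:ℝ)^(i*(i-1)/2))⁻¹ * ∏ m ∈ Finset.Icc 1 (i-1), (1 - ((2:ℝ)^m)⁻¹) := by
    have step : ∀ m ∈ Finset.Icc 1 (i-1),
        |((2:ℝ)^m)⁻¹ - ((2:ℝ)^i)⁻¹| = ((2:ℝ)^m)⁻¹ * (1 - ((2:ℝ)^(i-m))⁻¹) := by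
      intro m hm
      simp only [Finset.mem_Icc] at hm
      have hdecomp : (2:ℝ)^i = (2:ℝ)^m * (2:ℝ)^(i-m) := by
        rw [← pow_add]; congr 1; omega
      have hpos : (0:ℝ) < (2:ℝ)^(i-m) := by positivity
      have hpos2 : (0:ℝ) < (2:ℝ)^m := by positivity
      have hge : (1:ℝ) ≤ (2:ℝ)^(i-m) := one_le_pow₀ (by norm_num)
      rw [abs_of_nonneg]
      · rw [hdecomp, mul_inv]
        field_simp
      · rw [hdecomp, mul_inv]
        have : ((2:ℝ)^(i-m))⁻¹ ≤ 1 := inv_le_one_of_one_le₀ hge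
        nlinarith [inv_pos.mpr hpos2]
    rw [Finset.prod_congr rfl step, Finset.prod_mul_distrib, Finset.prod_inv_distrib,
      Finset.prod_pow_eq_pow_sum, sum_Icc_one]
    have hsum : (i-1)*(i-1+1)/2 = i*(i-1)/2 := by
      rw [Nat.sub_add_cancel h1, Nat.mul_comm]
    rw [hsum]
    congr 1
    apply Finset.prod_nbij' (fun m => i - m) (fun m => i - m)
    · intro a ha; simp only [Finset.mem_Icc] at ha ⊢; omega
    · intro a ha; simp only [Finset.mem_Icc] at ha ⊢; omega
    · intro a ha; simp only [Finset.mem_Icc] at ha; omega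
    · intro a ha; simp only [Finset.mem_Icc] at ha; omega
    · intro a ha; rfl
  have hR : (∏ m ∈ Finset.Icc (i+1) k, |((2:ℝ)^m)⁻¹ - ((2:ℝ)^i)⁻¹|)
      = ((2:ℝ)^(i*(k-i)))⁻¹ * ∏ m ∈ Finset.Icc 1 (k-i), (1 - ((2:ℝ)^m)⁻¹) := by
    have step : ∀ m ∈ Finset.Icc (i+1) k,
        |((2:ℝ)^m)⁻¹ - ((2:ℝ)^i)⁻¹| = ((2:ℝ)^i)⁻¹ * (1 - ((2:ℝ)^(m-i))⁻¹) := by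
      intro m hm
      simp only [Finset.mem_Icc] at hm
      have hdecomp : (2:ℝ)^m = (2:ℝ)^i * (2:ℝ)^(m-i) := by
        rw [← pow_add]; congr 1; omega
      have hpos : (0:ℝ) < (2:ℝ)^(m-i) := by positivity
      have hpos2 : (0:ℝ) < (2:ℝ)^i := by positivity
      have hge : (1:ℝ) ≤ (2:ℝ)^(m-i) := one_le_pow₀ (by norm_num)
      rw [abs_of_nonpos]
      · rw [hdecomp, mul_inv]
        field_simp
        ring
      · rw [hdecomp, mul_inv]
        have : ((2:ℝ)^(m-i))⁻¹ ≤ 1 := inv_le_one_of_one_le₀ hge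
        nlinarith [inv_pos.mpr hpos2]
    rw [Finset.prod_congr rfl step, Finset.prod_mul_distrib, Finset.prod_const]
    have hcard : (Finset.Icc (i+1) k).card = k - i := by
      rw [Nat.card_Icc]; omega
    have hp : (((2:ℝ)^i)⁻¹)^(k-i) = ((2:ℝ)^(i*(k-i)))⁻¹ := by
      rw [inv_pow, ← pow_mul]
    rw [hcard, hp]
    congr 1
    apply Finset.prod_nbij' (fun m => m - i) (fun m => m + i)
    · intro a ha; simp only [Finset.mem_Icc] at ha ⊢; omega
    · intro a ha; simp only [Finset.mem_Icc] at ha ⊢; omega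
    · intro a ha; simp only [Finset.mem_Icc] at ha; omega
    · intro a ha; simp only [Finset.mem_Icc] at ha; omega
    · intro a ha; rfl
  rw [hL, hR]
  have hexp : i + i*(i-1)/2 + i*(k-i) = i*(i+1)/2 + i*(k-i) := by
    obtain ⟨j, rfl⟩ : ∃ j, i = j + 1 := ⟨i-1, by omega⟩
    have h2 : 2 ∣ j * (j + 1) := (Nat.even_mul_succ_self j).two_dvd
    have key : (j+1)*(j+1+1) = j*(j+1) + 2*(j+1) := by ring
    have key2 : (j+1)*(j+1-1) = j*(j+1) := by
      simp [Nat.mul_comm]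
    omega
  rw [← hexp]
  rw [pow_add, pow_add, mul_inv, mul_inv]
  ring
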